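/- arXiv:1107.1091 — 3 statements merged into one kernel-verified Lean document; each statement's English description precedes it below -/
import Mathlib

section
/- Let δ: L₁ → L₂ and ρ: M₁ → M₂ be branched coverings of finite laminations on the circle C = ℝ/2πℤ, both of the same degree d ≥ 1, and let s₁: C → C be a rotation (translation of C) which carries every equivalence class of L₁ onto an equivalence class of M₁ and whose inverse carries classes of M₁ to classes of L₁. Then there exists a unique rotation s₂: C → C such that s₂ ∘ δ = ρ ∘ s₁; moreover s₂ carries every class of L₂ onto a class of M₂. -/
open Set MeasureTheory Filter Topology

noncomputable section

/-- The circle `ℝ/2πℤ`. -/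
abbrev Circle2pi : Type := AddCircle (2 * Real.pi)

instance : Fact ((0 : ℝ) < 2 * Real.pi) := ⟨by positivity⟩

/-- A finite lamination on the circle `ℝ/2πℤ`: an equivalence relation whose classes are
finite, all but finitely many of which are singletons, and whose distinct classes are
unlinked (equivalent pairs from distinct classes lie in a common connected component of the
complement of the other pair). -/
structure FiniteLamination where
  rel : Circle2pi → Circle2pi → Prop
  iseqv : Equivalence rel
  class_finite : ∀ x, {y | rel x y}.Finite
  nontrivial_finite : {x | ∃ y, rel x y ∧ y ≠ x}.Finite
  unlinked : ∀ a b c d : Circle2pi, rel a b → rel c d → ¬ rel a c → a ≠ b → c ≠ d →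
    b ∈ connectedComponentIn ({c, d}ᶜ : Set Circle2pi) a

/-- The equivalence class of `x` under the lamination `L`. -/
def FiniteLamination.cls (L : FiniteLamination) (x : Circle2pi) : Set Circle2pi :=
  {y | L.rel x y}

/-- `a` and `b` are adjacent (consecutive) in the cyclic order of the set `A`:
both belong to `A`, are distinct, and one of the two open arcs bounded by `a` and `b`
(i.e. one of the connected components of the complement of `{a, b}`) contains no point of `A`. -/
def AdjacentIn (A : Set Circle2pi) (a b : Circle2pi) : Prop :=
  a ∈ A ∧ b ∈ A ∧ a ≠ b ∧
    ∃ x ∈ ({a, b}ᶜ : Set Circle2pi),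
      connectedComponentIn ({a, b}ᶜ : Set Circle2pi) x ∩ A = ∅

/-- A branched covering of finite laminations: an affine degree `d ≥ 1` map
`t ↦ d • t + c` of the circle carrying each `L₁`-class exactly onto an `L₂`-class and
preserving consecutivity of points of a class whenever the image class is nontrivial. -/
structure LamBranchedCover (L₁ L₂ : FiniteLamination) where
  deg : ℕ
  deg_pos : 1 ≤ deg
  shift : Circle2pi
  maps_cls : ∀ x : Circle2pi,
    (fun t => deg • t + shift) '' L₁.cls x = L₂.cls (deg • x + shift)
  consecutive : ∀ x a b : Circle2pi,
    ¬ ((fun t => deg • t + shift) '' L₁.cls x).Subsingleton →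
    AdjacentIn (L₁.cls x) a b →
    AdjacentIn ((fun t => deg • t + shift) '' L₁.cls x) (deg • a + shift) (deg • b + shift)

/-- The underlying circle map of a branched covering of laminations. -/
def LamBranchedCover.map {L₁ L₂ : FiniteLamination} (δ : LamBranchedCover L₁ L₂) :
    Circle2pi → Circle2pi := fun t => δ.deg • t + δ.shift

/-- The set `S` is unlinked with every pair of `L`-equivalent points lying in a
nontrivial class. -/
def UnlinkedSet (L : FiniteLamination) (S : Set Circle2pi) : Prop :=
  ∀ a ∈ S, ∀ b ∈ S, ∀ c d : Circle2pi, L.rel c d → c ≠ d →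
    b ∈ connectedComponentIn ({c, d}ᶜ : Set Circle2pi) a

/-- A gap of the lamination `L`: a maximal open subset of the circle every pair of whose
points is unlinked with every pair of `L`-equivalent points in a nontrivial class. -/
def IsGapOf (L : FiniteLamination) (G : Set Circle2pi) : Prop :=
  IsOpen G ∧ G.Nonempty ∧ UnlinkedSet L G ∧
    ∀ G' : Set Circle2pi, IsOpen G' → UnlinkedSet L G' → G ⊆ G' → G = G'


lemma lamBranchedCover_map_surjective {L₁ L₂ : FiniteLamination}
    (δ : LamBranchedCover L₁ L₂) : Function.Surjective δ.map := by
  intro y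
  obtain ⟨r, hr⟩ := QuotientAddGroup.mk'_surjective _ (y - δ.shift)
  refine ⟨((r / δ.deg : ℝ) : Circle2pi), ?_⟩
  have hd : (δ.deg : ℝ) ≠ 0 := by
    have := δ.deg_pos; exact_mod_cast (by omega : δ.deg ≠ 0)
  have : (δ.deg • ((r / δ.deg : ℝ) : Circle2pi)) = ((r : ℝ) : Circle2pi) := by
    rw [← AddCircle.coe_nsmul, nsmul_eq_mul, mul_div_cancel₀ _ hd]
  show δ.deg • ((r / δ.deg : ℝ) : Circle2pi) + δ.shift = y
  rw [this]
  have : ((r : ℝ) : Circle2pi) = y - δ.shift := hr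
  rw [this]; abel

/-- Given branched coverings `δ : L₁ → L₂` and `ρ : M₁ → M₂` of the same
degree and a rotation `s₁` of the circle carrying classes of `L₁` onto classes of `M₁`
(and whose inverse carries classes of `M₁` to classes of `L₁`), there exists a unique
rotation `s₂` with `s₂ ∘ δ = ρ ∘ s₁`; moreover any such `s₂` carries every class of `L₂`
onto a class of `M₂`. -/
theorem lamination_cover_determined_by_domain_and_degree
    (L₁ L₂ M₁ M₂ : FiniteLamination)
    (δ : LamBranchedCover L₁ L₂) (ρ : LamBranchedCover M₁ M₂)
    (hdeg : δ.deg = ρ.deg)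
    (s₁ : Circle2pi → Circle2pi) (hrot : ∃ c : Circle2pi, ∀ t, s₁ t = t + c)
    (hfwd : ∀ x : Circle2pi, ∃ z : Circle2pi, s₁ '' L₁.cls x = M₁.cls z)
    (hbwd : ∀ z : Circle2pi, ∃ x : Circle2pi, s₁ ⁻¹' M₁.cls z = L₁.cls x) :
    (∃! s₂ : Circle2pi → Circle2pi,
        (∃ c : Circle2pi, ∀ t, s₂ t = t + c) ∧ s₂ ∘ δ.map = ρ.map ∘ s₁) ∧
      ∀ s₂ : Circle2pi → Circle2pi,
        (∃ c : Circle2pi, ∀ t, s₂ t = t + c) → s₂ ∘ δ.map = ρ.map ∘ s₁ →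
        ∀ y : Circle2pi, ∃ w : Circle2pi, s₂ '' L₂.cls y = M₂.cls w := by
  obtain ⟨c₁, hc₁⟩ := hrot
  set c₂ : Circle2pi := ρ.deg • c₁ + ρ.shift - δ.shift with hc₂def
  have hmap : ∀ t, δ.map t + c₂ = ρ.map (s₁ t) := by
    intro t
    simp only [LamBranchedCover.map, hc₁, hc₂def, smul_add, hdeg]
    abel
  have hsurj := lamBranchedCover_map_surjective δ
  have huniq : ∀ s : Circle2pi → Circle2pi, s ∘ δ.map = ρ.map ∘ s₁ →
      s = fun t => t + c₂ := by
    intro s heq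
    funext t
    obtain ⟨u, hu⟩ := hsurj t
    have h1 : s (δ.map u) = ρ.map (s₁ u) := congrFun heq u
    rw [hu] at h1
    simp only [h1, ← hmap u, hu]
  constructor
  · exact ⟨fun t => t + c₂, ⟨⟨c₂, fun t => rfl⟩, funext hmap⟩,
      fun s hs => huniq s hs.2⟩
  · intro s₂ _ heq y
    obtain ⟨x, hx⟩ := hsurj y
    obtain ⟨z, hz⟩ := hfwd x
    refine ⟨ρ.map z, ?_⟩
    have h1 : L₂.cls y = δ.map '' L₁.cls x := by
      rw [← hx]; exact (δ.maps_cls x).symm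
    calc s₂ '' L₂.cls y = (s₂ ∘ δ.map) '' L₁.cls x := by
          rw [h1, Set.image_comp]
      _ = (ρ.map ∘ s₁) '' L₁.cls x := by rw [heq]
      _ = ρ.map '' (s₁ '' L₁.cls x) := by rw [Set.image_comp]
      _ = ρ.map '' M₁.cls z := by rw [hz]
      _ = M₂.cls (ρ.map z) := ρ.maps_cls z

end
end

section
/- Let δ: L₁ → L₂ be a branched covering of finite laminations on the circle C = ℝ/2πℤ of degree d. Suppose L₁ has a rotational symmetry of order k, i.e. the rotation of C by angle 2π/k carries every L₁-class onto an L₁-class. Then the rotation of C by angle 2π·d/k carries every L₂-class onto an L₂-class, and this rotation has order k/gcd(k,d) in the rotation group of C; in particular L₂ has a rotational symmetry of order k/gcd(k,d). -/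
open Set MeasureTheory Filter Topology

noncomputable section

/-- If `δ : L₁ → L₂` is a branched covering of degree `d` and `L₁` has a
rotational symmetry of order `k` (rotation by `2π/k` carries `L₁`-classes onto
`L₁`-classes), then rotation by `2πd/k` carries `L₂`-classes onto `L₂`-classes, and
this rotation has order `k / gcd(k, d)` in the rotation group of the circle; in
particular `L₂` has a rotational symmetry of order `k / gcd(k, d)`. -/
theorem lamination_symmetry_order_under_cover
    (L₁ L₂ : FiniteLamination) (δ : LamBranchedCover L₁ L₂)
    (k : ℕ) (hk : 0 < k)
    (hsym : ∀ x : Circle2pi,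
      (fun t => t + ((2 * Real.pi / k : ℝ) : Circle2pi)) '' L₁.cls x
        = L₁.cls (x + ((2 * Real.pi / k : ℝ) : Circle2pi))) :
    (∀ y : Circle2pi,
      (fun t => t + ((2 * Real.pi * δ.deg / k : ℝ) : Circle2pi)) '' L₂.cls y
        = L₂.cls (y + ((2 * Real.pi * δ.deg / k : ℝ) : Circle2pi))) ∧
      addOrderOf (((2 * Real.pi * δ.deg / k : ℝ) : Circle2pi)) = k / Nat.gcd k δ.deg := by
  have hdpos : 0 < δ.deg := δ.deg_pos
  set d := δ.deg with hd
  have hdC : (d : ℕ) • (((2 * Real.pi / k : ℝ) : Circle2pi))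
      = (((2 * Real.pi * d / k : ℝ) : Circle2pi)) := by
    rw [← AddCircle.coe_nsmul]
    congr 1
    push_cast
    ring
  constructor
  · intro y
    -- δ.map is surjective, so write y = d • x + shift
    obtain ⟨x, hx⟩ : ∃ x : Circle2pi, d • x + δ.shift = y := by
      obtain ⟨r, hr⟩ : ∃ r : ℝ, (r : Circle2pi) = y := Quotient.exists_rep y
      obtain ⟨s, hs⟩ : ∃ s : ℝ, (s : Circle2pi) = δ.shift := Quotient.exists_rep δ.shift
      refine ⟨(((r - s) / d : ℝ) : Circle2pi), ?_⟩
      rw [← hr, ← hs, ← AddCircle.coe_nsmul, ← AddCircle.coe_add]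
      congr 1
      have hd0 : (d : ℝ) ≠ 0 := Nat.cast_ne_zero.mpr hdpos.ne'
      rw [nsmul_eq_mul]
      field_simp
      ring
    have h1 : L₂.cls y = (fun t => d • t + δ.shift) '' L₁.cls x := by
      rw [δ.maps_cls x, hx]
    rw [h1, Set.image_image]
    have h2 : (fun t => d • t + δ.shift + ((2 * Real.pi * d / k : ℝ) : Circle2pi))
        = (fun t => d • (t + ((2 * Real.pi / k : ℝ) : Circle2pi)) + δ.shift) := by
      funext t
      rw [smul_add, hdC]
      abel
    rw [h2, ← Set.image_image (fun t => d • t + δ.shift)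
      (fun t => t + ((2 * Real.pi / k : ℝ) : Circle2pi)), hsym x, δ.maps_cls,
      smul_add, hdC, ← hd]
    rw [← hx]
    congr 1
    abel
  · -- order computation
    set g := Nat.gcd k d with hg
    have hgpos : 0 < g := Nat.gcd_pos_of_pos_left d hk
    have hkg : 0 < k / g := Nat.div_pos (Nat.le_of_dvd hk (Nat.gcd_dvd_left k d)) hgpos
    have hcop : (d / g).gcd (k / g) = 1 := (Nat.coprime_div_gcd_div_gcd hgpos).symm
    have hval : (2 * Real.pi * d / k : ℝ)
        = ((d / g : ℕ) : ℝ) / ((k / g : ℕ) : ℝ) * (2 * Real.pi) := by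
      have h1 : g * (k / g) = k := Nat.mul_div_cancel' (Nat.gcd_dvd_left k d)
      have h2 : g * (d / g) = d := Nat.mul_div_cancel' (Nat.gcd_dvd_right k d)
      have hk0 : (k : ℝ) ≠ 0 := Nat.cast_ne_zero.mpr hk.ne'
      have hkg0 : ((k / g : ℕ) : ℝ) ≠ 0 := Nat.cast_ne_zero.mpr hkg.ne'
      have hg0 : (g : ℝ) ≠ 0 := Nat.cast_ne_zero.mpr hgpos.ne'
      have h1' : (g : ℝ) * ((k / g : ℕ) : ℝ) = (k : ℝ) := by exact_mod_cast congrArg (Nat.cast : ℕ → ℝ) h1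
      have h2' : (g : ℝ) * ((d / g : ℕ) : ℝ) = (d : ℝ) := by exact_mod_cast congrArg (Nat.cast : ℕ → ℝ) h2
      field_simp
      rw [← h1', ← h2']
      ring
    rw [hval]
    exact AddCircle.addOrderOf_div_of_gcd_eq_one hkg hcop

end
end

section
/- Let f ∈ ℂ[X] be a polynomial of degree d ≥ 2. Then for every z ∈ ℂ the limit G_f(z) := lim_{n→∞} d^{−n} · log⁺|fⁿ(z)| exists (as a finite nonnegative real number), and the resulting function G_f: ℂ → [0,∞) satisfies the functional equation G_f(f(z)) = d · G_f(z) for all z ∈ ℂ. -/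
open Filter Topology

noncomputable section

lemma escape_key (f : Polynomial ℂ) (d : ℕ) (hd : 2 ≤ d) (hdeg : f.natDegree = d) :
    ∃ C : ℝ, 0 ≤ C ∧ ∀ w : ℂ,
      |Real.log (max ‖f.eval w‖ 1) - d * Real.log (max ‖w‖ 1)| ≤ C := by
  have hf0 : f ≠ 0 := fun h => by simp [h] at hdeg; omega
  set a : ℝ := ‖f.leadingCoeff‖ with ha_def
  have ha : 0 < a := by
    simpa [ha_def] using (norm_pos_iff).mpr (Polynomial.leadingCoeff_ne_zero.mpr hf0)
  set S : ℝ := ∑ i ∈ Finset.range d, ‖f.coeff i‖ with hS_def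
  have hS : 0 ≤ S := Finset.sum_nonneg fun _ _ => norm_nonneg _
  set T : ℝ := S + a with hT_def
  have hT : 0 < T := add_pos_of_nonneg_of_pos hS ha
  set R : ℝ := max 1 (2 * S / a) with hR_def
  have hR1 : 1 ≤ R := le_max_left _ _
  have hRS : 2 * S / a ≤ R := le_max_right _ _
  refine ⟨max (Real.log (max T 1)) (max ((d : ℝ) * Real.log R) (-Real.log (a / 2))), ?_, ?_⟩
  · exact le_trans (Real.log_nonneg (le_max_right _ _)) (le_max_left _ _)
  intro w
  set M : ℝ := max ‖w‖ 1 with hM_def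
  have hM1 : 1 ≤ M := le_max_right _ _
  have hM0 : 0 < M := lt_of_lt_of_le one_pos hM1
  have hwM : ‖w‖ ≤ M := le_max_left _ _
  -- upper bound on ‖f.eval w‖
  have hub : ‖f.eval w‖ ≤ T * M ^ d := by
    have h1 : f.eval w = ∑ i ∈ Finset.range (d + 1), f.coeff i * w ^ i := by
      rw [← hdeg]; exact Polynomial.eval_eq_sum_range w
    calc ‖f.eval w‖ ≤ ∑ i ∈ Finset.range (d + 1), ‖f.coeff i * w ^ i‖ := by
          rw [h1]; exact norm_sum_le _ _
      _ ≤ ∑ i ∈ Finset.range (d + 1), ‖f.coeff i‖ * M ^ d := by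
          refine Finset.sum_le_sum fun i hi => ?_
          rw [norm_mul, norm_pow]
          refine mul_le_mul_of_nonneg_left ?_ (norm_nonneg _)
          calc ‖w‖ ^ i ≤ M ^ i := pow_le_pow_left₀ (norm_nonneg _) hwM i
            _ ≤ M ^ d := pow_le_pow_right₀ hM1 (Nat.lt_succ_iff.mp (Finset.mem_range.mp hi))
      _ = T * M ^ d := by
          rw [← Finset.sum_mul, hT_def, hS_def, Finset.sum_range_succ, ← hdeg,
            Polynomial.coeff_natDegree, ← ha_def]
  have hMd1 : (1:ℝ) ≤ M ^ d := one_le_pow₀ hM1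
  have hL0 : 0 ≤ Real.log (max ‖f.eval w‖ 1) := Real.log_nonneg (le_max_right _ _)
  have hupper : Real.log (max ‖f.eval w‖ 1) - d * Real.log M ≤ Real.log (max T 1) := by
    have h2 : max ‖f.eval w‖ 1 ≤ max T 1 * M ^ d := by
      refine max_le (hub.trans ?_) ?_
      · exact mul_le_mul_of_nonneg_right (le_max_left _ _) (pow_pos hM0 d).le
      · calc (1:ℝ) = 1 * 1 := (one_mul 1).symm
          _ ≤ max T 1 * M ^ d := mul_le_mul (le_max_right _ _) hMd1 zero_le_one
              (le_trans zero_le_one (le_max_right _ _))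
    have h3 := Real.log_le_log (lt_of_lt_of_le one_pos (le_max_right _ _)) h2
    rw [Real.log_mul (ne_of_gt (lt_of_lt_of_le one_pos (le_max_right _ _)))
      (ne_of_gt (pow_pos hM0 d)), Real.log_pow] at h3
    linarith
  -- lower bound
  have hlower : (d : ℝ) * Real.log M - Real.log (max ‖f.eval w‖ 1) ≤
      max ((d : ℝ) * Real.log R) (-Real.log (a / 2)) := by
    rcases le_or_gt ‖w‖ R with hw | hw
    · refine le_trans ?_ (le_max_left _ _)
      have : Real.log M ≤ Real.log R :=
        Real.log_le_log hM0 (max_le hw hR1)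
      nlinarith [Real.log_nonneg hM1, (Nat.cast_nonneg d : (0:ℝ) ≤ (d:ℝ))]
    · refine le_trans ?_ (le_max_right _ _)
      have hw1 : (1:ℝ) ≤ ‖w‖ := hR1.trans hw.le
      have hMw : M = ‖w‖ := max_eq_left hw1
      -- ‖f.eval w‖ ≥ (a/2) * ‖w‖ ^ d
      have hsplit : f.eval w = f.eraseLead.eval w + f.leadingCoeff * w ^ d := by
        conv_lhs => rw [← Polynomial.eraseLead_add_C_mul_X_pow f]
        simp [hdeg]
      have herase : ‖f.eraseLead.eval w‖ ≤ S * ‖w‖ ^ (d - 1) := by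
        have hlt : f.eraseLead.natDegree < d := by
          have := Polynomial.eraseLead_natDegree_le f
          omega
        rw [Polynomial.eval_eq_sum_range' hlt]
        calc ‖∑ i ∈ Finset.range d, f.eraseLead.coeff i * w ^ i‖
            ≤ ∑ i ∈ Finset.range d, ‖f.eraseLead.coeff i * w ^ i‖ := norm_sum_le _ _
          _ ≤ ∑ i ∈ Finset.range d, ‖f.coeff i‖ * ‖w‖ ^ (d - 1) := by
              refine Finset.sum_le_sum fun i hi => ?_
              have hi' := Finset.mem_range.mp hi
              rw [norm_mul, norm_pow,
                Polynomial.eraseLead_coeff_of_ne i (by omega : i ≠ f.natDegree)]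
              exact mul_le_mul_of_nonneg_left
                (pow_le_pow_right₀ hw1 (by omega)) (norm_nonneg _)
          _ = S * ‖w‖ ^ (d - 1) := by rw [← Finset.sum_mul]
      have hwpos : (0:ℝ) < ‖w‖ := lt_of_lt_of_le one_pos hw1
      have hpow : ‖w‖ ^ d = ‖w‖ ^ (d - 1) * ‖w‖ := by
        rw [← pow_succ]; congr 1; omega
      have hSa : S ≤ a / 2 * ‖w‖ := by
        have : 2 * S / a ≤ ‖w‖ := hRS.trans hw.le
        rw [div_le_iff₀ ha] at this
        nlinarith
      have hflow : a / 2 * ‖w‖ ^ d ≤ ‖f.eval w‖ := by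
        have h4 : ‖f.eval w‖ ≥ ‖f.leadingCoeff * w ^ d‖ - ‖f.eraseLead.eval w‖ := by
          rw [hsplit]
          have h4' : ‖f.leadingCoeff * w ^ d‖ ≤
              ‖f.eraseLead.eval w + f.leadingCoeff * w ^ d‖ + ‖f.eraseLead.eval w‖ := by
            calc ‖f.leadingCoeff * w ^ d‖
                = ‖(f.eraseLead.eval w + f.leadingCoeff * w ^ d) - f.eraseLead.eval w‖ := by
                  rw [add_sub_cancel_left]
              _ ≤ _ := norm_sub_le _ _
          linarith
        rw [norm_mul, norm_pow, ← ha_def] at h4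
        have hpw : (0:ℝ) ≤ ‖w‖ ^ (d-1) := (pow_pos hwpos (d-1)).le
        nlinarith [herase]
      have hfpos : (0:ℝ) < a / 2 * ‖w‖ ^ d := mul_pos (half_pos ha) (pow_pos hwpos d)
      have h5 : Real.log (a / 2 * ‖w‖ ^ d) ≤ Real.log (max ‖f.eval w‖ 1) :=
        Real.log_le_log hfpos (hflow.trans (le_max_left _ _))
      rw [Real.log_mul (ne_of_gt (half_pos ha)) (ne_of_gt (pow_pos hwpos d)),
        Real.log_pow] at h5
      rw [hMw]
      linarith
  rw [abs_le]
  constructor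
  · rw [hM_def] at hlower
    linarith [le_max_right ((d : ℝ) * Real.log R) (-Real.log (a / 2)),
      le_max_right (Real.log (max T 1)) (max ((d : ℝ) * Real.log R) (-Real.log (a / 2)))]
  · rw [hM_def] at hupper
    linarith [le_max_left (Real.log (max T 1)) (max ((d : ℝ) * Real.log R) (-Real.log (a / 2)))]


/-- For a polynomial `f ∈ ℂ[X]` of degree `d ≥ 2`, the escape-rate
function `G_f(z) = lim_{n→∞} d⁻ⁿ · log⁺ |fⁿ(z)|` exists at every point as a finite
nonnegative real number, and it satisfies the functional equation
`G_f(f(z)) = d · G_f(z)` for all `z ∈ ℂ`.  Here `log⁺ x = max (log x) 0 = log (max x 1)`. -/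
theorem escape_rate_exists_and_functional_equation
    (f : Polynomial ℂ) (d : ℕ) (hd : 2 ≤ d) (hdeg : f.natDegree = d) :
    ∃ G : ℂ → ℝ,
      (∀ z : ℂ, 0 ≤ G z) ∧
      (∀ z : ℂ, Tendsto
        (fun n : ℕ => Real.log (max ‖(fun w : ℂ => f.eval w)^[n] z‖ 1) / (d : ℝ) ^ n)
        atTop (nhds (G z))) ∧
      (∀ z : ℂ, G (f.eval z) = d * G z) := by
  obtain ⟨C, hC0, hC⟩ := escape_key f d hd hdeg
  have hd1 : (1:ℝ) < d := by exact_mod_cast lt_of_lt_of_le one_lt_two (by exact_mod_cast hd)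
  have hdpos : (0:ℝ) < d := lt_trans one_pos hd1
  set u : ℂ → ℕ → ℝ :=
    fun z n => Real.log (max ‖(fun w : ℂ => f.eval w)^[n] z‖ 1) / (d:ℝ) ^ n with hu
  have hcauchy : ∀ z, CauchySeq (u z) := by
    intro z
    refine cauchySeq_of_le_geometric (1/(d:ℝ)) (C/(d:ℝ)) ((div_lt_one hdpos).mpr hd1) ?_
    intro n
    have hiter : (fun w : ℂ => f.eval w)^[n+1] z = f.eval ((fun w : ℂ => f.eval w)^[n] z) :=
      Function.iterate_succ_apply' _ n z
    set w := (fun w : ℂ => f.eval w)^[n] z with hw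
    have hdn : ((d:ℝ)) ^ (n+1) ≠ 0 := ne_of_gt (pow_pos hdpos (n+1))
    have heq : u z (n+1) - u z n =
        (Real.log (max ‖f.eval w‖ 1) - d * Real.log (max ‖w‖ 1)) / (d:ℝ)^(n+1) := by
      simp only [hu, hiter, ← hw]
      rw [pow_succ]
      field_simp
    rw [Real.dist_eq, abs_sub_comm, heq, abs_div,
      abs_of_pos (pow_pos hdpos (n+1))]
    have h2 : C / (d:ℝ)^(n+1) = C/(d:ℝ) * (1/(d:ℝ))^n := by
      rw [div_pow, one_pow, div_mul_div_comm, mul_one, ← pow_succ']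
    rw [← h2]
    exact (div_le_div_iff_of_pos_right (pow_pos hdpos (n+1))).mpr (hC w)
  refine ⟨fun z => limUnder atTop (u z), ?_, ?_, ?_⟩
  · intro z
    refine ge_of_tendsto' (hcauchy z).tendsto_limUnder fun n => ?_
    exact div_nonneg (Real.log_nonneg (le_max_right _ _)) (pow_pos hdpos n).le
  · intro z
    exact (hcauchy z).tendsto_limUnder
  · intro z
    have h1 : ∀ n, u (f.eval z) n = d * u z (n+1) := by
      intro n
      simp only [hu, Function.iterate_succ_apply]
      rw [pow_succ]
      have hdn : ((d:ℝ)) ^ n ≠ 0 := ne_of_gt (pow_pos hdpos n)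
      field_simp
    have h2 : Tendsto (fun n => u z (n+1)) atTop (nhds (limUnder atTop (u z))) :=
      (tendsto_add_atTop_iff_nat 1).mpr (hcauchy z).tendsto_limUnder
    have h3 : Tendsto (u (f.eval z)) atTop (nhds ((d:ℝ) * limUnder atTop (u z))) := by
      have := h2.const_mul (d:ℝ)
      simpa [← h1] using this
    exact tendsto_nhds_unique (hcauchy (f.eval z)).tendsto_limUnder h3


end
end
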